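/- The within-group third moment estimator is unbiased after a finite-sample correction: with N_Adj,A = (n(n−1)(n−2)/((n_A−1)(n_A−2)n_A)) · (n_A³/n³), one has N_Adj,A · E[(1/n_A) ∑_{i∈A} (x_i − x̄_A)(y_i − ȳ_A)(z_i − z̄_A)] = (1/n) ∑_{i=1}^n (x_i − x̄)(y_i − ȳ)(z_i − z̄). -/

import Mathlib

open Finset

lemma aux_card_supersets {α : Type*} [DecidableEq α] [Fintype α] (t : Finset α) {m : ℕ}
    (htm : t.card ≤ m) :
    (((univ : Finset α).powersetCard m).filter (fun A => t ⊆ A)).card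
      = (Fintype.card α - t.card).choose (m - t.card) := by
  have h : (Fintype.card α - t.card).choose (m - t.card)
      = (((univ : Finset α) \ t).powersetCard (m - t.card)).card := by
    rw [Finset.card_powersetCard, Finset.card_sdiff_of_subset (Finset.subset_univ t), Finset.card_univ]
  rw [h]
  refine Finset.card_bij' (fun A _ => A \ t) (fun B _ => B ∪ t) ?_ ?_ ?_ ?_
  · intro A hA
    simp only [Finset.mem_filter, Finset.mem_powersetCard] at hA
    obtain ⟨⟨hAs, hAc⟩, htA⟩ := hA
    simp only [Finset.mem_powersetCard]
    exact ⟨Finset.sdiff_subset_sdiff hAs (le_refl t), by rw [Finset.card_sdiff_of_subset htA, hAc]⟩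
  · intro B hB
    simp only [Finset.mem_powersetCard] at hB
    obtain ⟨hBs, hBc⟩ := hB
    have hd : Disjoint B t := (Finset.subset_sdiff.mp hBs).2
    simp only [Finset.mem_filter, Finset.mem_powersetCard]
    refine ⟨⟨Finset.subset_univ _, ?_⟩, Finset.subset_union_right⟩
    rw [Finset.card_union_of_disjoint hd, hBc, Nat.sub_add_cancel htm]
  · intro A hA
    simp only [Finset.mem_filter, Finset.mem_powersetCard] at hA
    exact Finset.sdiff_union_of_subset hA.2
  · intro B hB
    simp only [Finset.mem_powersetCard] at hB
    have hd : Disjoint B t := (Finset.subset_sdiff.mp hB.1).2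
    show (B ∪ t) \ t = B
    rw [Finset.union_sdiff_right, Finset.sdiff_eq_self_iff_disjoint.mpr hd]

variable {α : Type*} [DecidableEq α] [Fintype α]

lemma count1 {m : ℕ} (hm : 1 ≤ m) (f : α → ℝ) :
    ∑ A ∈ Finset.powersetCard m (univ : Finset α), ∑ i ∈ A, f i
      = ((Fintype.card α - 1).choose (m - 1) : ℝ) * ∑ i, f i := by
  have h1 : ∀ A ∈ Finset.powersetCard m (univ : Finset α),
      ∑ i ∈ A, f i = ∑ i : α, if i ∈ A then f i else 0 := by
    intro A _
    rw [Finset.sum_ite_mem, Finset.univ_inter]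
  rw [Finset.sum_congr rfl h1, Finset.sum_comm]
  have h2 : ∀ i : α, ∑ A ∈ Finset.powersetCard m (univ : Finset α),
      (if i ∈ A then f i else 0)
      = (((Finset.powersetCard m (univ : Finset α)).filter
          (fun A => ({i} : Finset α) ⊆ A)).card : ℝ) * f i := by
    intro i
    rw [← Finset.sum_filter]
    simp only [Finset.singleton_subset_iff]
    rw [Finset.sum_const, nsmul_eq_mul]
  rw [Finset.sum_congr rfl (fun i _ => h2 i), Finset.mul_sum]
  refine Finset.sum_congr rfl fun i _ => ?_
  rw [aux_card_supersets _ (by simpa using hm)]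
  simp

lemma count2 {m : ℕ} (hm : 2 ≤ m) (F : α → α → ℝ) :
    ∑ A ∈ Finset.powersetCard m (univ : Finset α), ∑ i ∈ A, ∑ j ∈ A.erase i, F i j
      = ((Fintype.card α - 2).choose (m - 2) : ℝ) * ∑ i, ∑ j ∈ univ.erase i, F i j := by
  have h1 : ∀ A ∈ Finset.powersetCard m (univ : Finset α),
      ∑ i ∈ A, ∑ j ∈ A.erase i, F i j
        = ∑ i : α, ∑ j ∈ univ.erase i, if i ∈ A ∧ j ∈ A then F i j else 0 := by
    intro A _
    have step : (∑ i : α, ∑ j ∈ univ.erase i, if i ∈ A ∧ j ∈ A then F i j else 0)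
        = ∑ i ∈ A, ∑ j ∈ univ.erase i, if i ∈ A ∧ j ∈ A then F i j else 0 :=
      (Finset.sum_subset (Finset.subset_univ A)
        (fun i _ hi => Finset.sum_eq_zero fun j _ => by simp [hi])).symm
    rw [step]
    refine Finset.sum_congr rfl fun i hi => ?_
    have e : ∀ j ∈ univ.erase i,
        (if i ∈ A ∧ j ∈ A then F i j else 0) = (if j ∈ A then F i j else 0) := by
      intro j _; simp [hi]
    rw [Finset.sum_congr rfl e, Finset.sum_ite_mem]
    apply Finset.sum_congr _ (fun j _ => rfl)
    ext j
    simp only [Finset.mem_inter, Finset.mem_erase, Finset.mem_univ, true_and]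
    tauto
  rw [Finset.sum_congr rfl h1, Finset.sum_comm]
  rw [Finset.mul_sum]
  refine Finset.sum_congr rfl fun i _ => ?_
  rw [Finset.sum_comm, Finset.mul_sum]
  refine Finset.sum_congr rfl fun j hj => ?_
  have hji : j ≠ i := (Finset.mem_erase.mp hj).1
  have hcond : ∀ A : Finset α, (i ∈ A ∧ j ∈ A) ↔ ({i, j} : Finset α) ⊆ A := by
    intro A; simp [Finset.insert_subset_iff]
  have key : ∑ A ∈ Finset.powersetCard m (univ : Finset α),
      (if i ∈ A ∧ j ∈ A then F i j else 0)
      = (((Finset.powersetCard m (univ : Finset α)).filter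
          (fun A => ({i, j} : Finset α) ⊆ A)).card : ℝ) * F i j := by
    simp only [hcond]
    rw [← Finset.sum_filter, Finset.sum_const, nsmul_eq_mul]
  have hc2 : ({i, j} : Finset α).card = 2 := by
    rw [Finset.card_insert_of_notMem (by simp [hji.symm]), Finset.card_singleton]
  rw [key, aux_card_supersets _ (by rw [hc2]; exact hm), hc2]

lemma count3 {m : ℕ} (hm : 3 ≤ m) (G : α → α → α → ℝ) :
    ∑ A ∈ Finset.powersetCard m (univ : Finset α),
        ∑ i ∈ A, ∑ j ∈ A.erase i, ∑ k ∈ (A.erase i).erase j, G i j k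
      = ((Fintype.card α - 3).choose (m - 3) : ℝ) *
        ∑ i : α, ∑ j ∈ univ.erase i, ∑ k ∈ ((univ : Finset α).erase i).erase j, G i j k := by
  have h1 : ∀ A ∈ Finset.powersetCard m (univ : Finset α),
      ∑ i ∈ A, ∑ j ∈ A.erase i, ∑ k ∈ (A.erase i).erase j, G i j k
        = ∑ i : α, ∑ j ∈ univ.erase i, ∑ k ∈ ((univ : Finset α).erase i).erase j,
            if i ∈ A ∧ j ∈ A ∧ k ∈ A then G i j k else 0 := by
    intro A _
    have step : (∑ i : α, ∑ j ∈ univ.erase i, ∑ k ∈ ((univ : Finset α).erase i).erase j,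
          if i ∈ A ∧ j ∈ A ∧ k ∈ A then G i j k else 0)
        = ∑ i ∈ A, ∑ j ∈ univ.erase i, ∑ k ∈ ((univ : Finset α).erase i).erase j,
            if i ∈ A ∧ j ∈ A ∧ k ∈ A then G i j k else 0 :=
      (Finset.sum_subset (Finset.subset_univ A)
        (fun i _ hi => Finset.sum_eq_zero fun j _ =>
          Finset.sum_eq_zero fun k _ => by simp [hi])).symm
    rw [step]
    refine Finset.sum_congr rfl fun i hi => ?_
    -- now fix i ∈ A; reduce j-sum similarly
    have step2 : (∑ j ∈ univ.erase i, ∑ k ∈ ((univ : Finset α).erase i).erase j,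
          if i ∈ A ∧ j ∈ A ∧ k ∈ A then G i j k else 0)
        = ∑ j ∈ A.erase i, ∑ k ∈ ((univ : Finset α).erase i).erase j,
            if i ∈ A ∧ j ∈ A ∧ k ∈ A then G i j k else 0 := by
      refine (Finset.sum_subset ?_ ?_).symm
      · exact Finset.erase_subset_erase i (Finset.subset_univ A)
      · intro j _ hj
        refine Finset.sum_eq_zero fun k _ => ?_
        have : j ∉ A ∨ j = i := by
          by_contra hcon
          push_neg at hcon
          exact hj (Finset.mem_erase.mpr ⟨hcon.2, hcon.1⟩)
        rcases this with h | h
        · simp [h]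
        · simp_all
    rw [step2]
    refine Finset.sum_congr rfl fun j hj => ?_
    have hjA : j ∈ A := Finset.mem_of_mem_erase hj
    have e : ∀ k ∈ ((univ : Finset α).erase i).erase j,
        (if i ∈ A ∧ j ∈ A ∧ k ∈ A then G i j k else 0) = (if k ∈ A then G i j k else 0) := by
      intro k _; simp [hi, hjA]
    rw [Finset.sum_congr rfl e, Finset.sum_ite_mem]
    apply Finset.sum_congr _ (fun k _ => rfl)
    ext k
    have hji : j ≠ i := (Finset.mem_erase.mp hj).1
    simp only [Finset.mem_inter, Finset.mem_erase, Finset.mem_univ, true_and, and_true]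
    tauto
  rw [Finset.sum_congr rfl h1, Finset.sum_comm, Finset.mul_sum]
  refine Finset.sum_congr rfl fun i _ => ?_
  rw [Finset.sum_comm, Finset.mul_sum]
  refine Finset.sum_congr rfl fun j hj => ?_
  rw [Finset.sum_comm, Finset.mul_sum]
  refine Finset.sum_congr rfl fun k hk => ?_
  have hji : j ≠ i := (Finset.mem_erase.mp hj).1
  have hki : k ≠ i := (Finset.mem_erase.mp (Finset.mem_of_mem_erase hk)).1
  have hkj : k ≠ j := (Finset.mem_erase.mp hk).1
  have hcond : ∀ A : Finset α, (i ∈ A ∧ j ∈ A ∧ k ∈ A) ↔ ({i, j, k} : Finset α) ⊆ A := by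
    intro A; simp [Finset.insert_subset_iff]
  have key : ∑ A ∈ Finset.powersetCard m (univ : Finset α),
      (if i ∈ A ∧ j ∈ A ∧ k ∈ A then G i j k else 0)
      = (((Finset.powersetCard m (univ : Finset α)).filter
          (fun A => ({i, j, k} : Finset α) ⊆ A)).card : ℝ) * G i j k := by
    simp only [hcond]
    rw [← Finset.sum_filter, Finset.sum_const, nsmul_eq_mul]
  have hc3 : ({i, j, k} : Finset α).card = 3 := by
    rw [Finset.card_insert_of_notMem (by simp [hji.symm, hki.symm]),
      Finset.card_insert_of_notMem (by simp [hkj.symm]), Finset.card_singleton]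
  rw [key, aux_card_supersets _ (by rw [hc3]; exact hm), hc3]

omit [Fintype α] in
lemma swap_pair (A : Finset α) (F : α → α → ℝ) :
    ∑ i ∈ A, ∑ j ∈ A.erase i, F i j = ∑ i ∈ A, ∑ j ∈ A.erase i, F j i := by
  have e : ∀ (G : α → α → ℝ), ∑ i ∈ A, ∑ j ∈ A.erase i, G i j
      = ∑ i ∈ A, ∑ j ∈ A, if j ≠ i then G i j else 0 := by
    intro G
    refine Finset.sum_congr rfl fun i _ => ?_
    rw [← Finset.filter_ne' A i, Finset.sum_filter]
  rw [e, e, Finset.sum_comm]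
  refine Finset.sum_congr rfl fun i _ => Finset.sum_congr rfl fun j _ => ?_
  exact if_congr ne_comm rfl rfl

omit [Fintype α] in
lemma pair_decomp (A : Finset α) (f g : α → ℝ) :
    (∑ i ∈ A, f i) * (∑ j ∈ A, g j)
      = ∑ i ∈ A, f i * g i + ∑ i ∈ A, ∑ j ∈ A.erase i, f i * g j := by
  rw [Finset.sum_mul_sum, ← Finset.sum_add_distrib]
  refine Finset.sum_congr rfl fun i hi => ?_
  rw [← Finset.add_sum_erase A (fun j => f i * g j) hi]

omit [Fintype α] in
lemma triple_decomp (A : Finset α) (f g h : α → ℝ) :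
    (∑ i ∈ A, f i) * (∑ i ∈ A, g i) * (∑ i ∈ A, h i)
      = ∑ i ∈ A, f i * g i * h i
        + ∑ i ∈ A, ∑ j ∈ A.erase i,
            (f i * (g j * h j) + f i * (g i * h j) + f j * (g i * h j))
        + ∑ i ∈ A, ∑ j ∈ A.erase i, ∑ k ∈ (A.erase i).erase j, f k * (g i * h j) := by
  rw [mul_assoc, pair_decomp A g h, mul_add, pair_decomp A f (fun i => g i * h i)]
  have e2 : (∑ k ∈ A, f k) * (∑ i ∈ A, ∑ j ∈ A.erase i, g i * h j)
      = (∑ i ∈ A, ∑ j ∈ A.erase i, (f i * (g i * h j) + f j * (g i * h j)))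
        + ∑ i ∈ A, ∑ j ∈ A.erase i, ∑ k ∈ (A.erase i).erase j, f k * (g i * h j) := by
    rw [Finset.mul_sum, ← Finset.sum_add_distrib]
    refine Finset.sum_congr rfl fun i hi => ?_
    rw [Finset.mul_sum, ← Finset.sum_add_distrib]
    refine Finset.sum_congr rfl fun j hj => ?_
    have h1 : ∑ k ∈ A, f k = f i + (f j + ∑ k ∈ (A.erase i).erase j, f k) := by
      rw [Finset.add_sum_erase _ f hj, Finset.add_sum_erase A f hi]
    rw [h1, add_mul, add_mul, Finset.sum_mul]
    ring
  rw [e2]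
  have e3 : ∑ i ∈ A, ∑ j ∈ A.erase i,
      (f i * (g j * h j) + f i * (g i * h j) + f j * (g i * h j))
      = (∑ i ∈ A, ∑ j ∈ A.erase i, f i * (g j * h j))
        + ∑ i ∈ A, ∑ j ∈ A.erase i, (f i * (g i * h j) + f j * (g i * h j)) := by
    rw [← Finset.sum_add_distrib]
    refine Finset.sum_congr rfl fun i _ => ?_
    rw [← Finset.sum_add_distrib]
    exact Finset.sum_congr rfl fun j _ => by ring
  rw [e3]
  ring

omit [Fintype α] in
lemma expand (x y z : α → ℝ) (A : Finset α) (m : ℕ) (hA : A.card = m) (h3 : 3 ≤ m) :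
    ∑ i ∈ A, (x i - (m:ℝ)⁻¹ * ∑ k ∈ A, x k) * (y i - (m:ℝ)⁻¹ * ∑ k ∈ A, y k) *
        (z i - (m:ℝ)⁻¹ * ∑ k ∈ A, z k)
      = (1 - 3/(m:ℝ) + 2/(m:ℝ)^2) * (∑ i ∈ A, x i * (y i * z i))
        - (1/(m:ℝ)) * (∑ i ∈ A, ∑ j ∈ A.erase i,
            (x i * (y j * z j) + y i * (x j * z j) + z i * (x j * y j)))
        + (2/(m:ℝ)^2) * ((∑ i ∈ A, ∑ j ∈ A.erase i,
              (x i * (y j * z j) + y i * (x j * z j) + z i * (x j * y j)))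
            + ∑ i ∈ A, ∑ j ∈ A.erase i, ∑ k ∈ (A.erase i).erase j, x k * (y i * z j)) := by
  have hm0 : ((m:ℕ):ℝ) ≠ 0 := by
    have : 0 < m := by omega
    exact_mod_cast this.ne'
  -- step 1 : reduce to symmetric functions of sums
  have step1 : ∑ i ∈ A, (x i - (m:ℝ)⁻¹ * ∑ k ∈ A, x k) * (y i - (m:ℝ)⁻¹ * ∑ k ∈ A, y k) *
        (z i - (m:ℝ)⁻¹ * ∑ k ∈ A, z k)
      = (∑ i ∈ A, x i * (y i * z i))
        - (m:ℝ)⁻¹ * ((∑ k ∈ A, x k) * (∑ i ∈ A, y i * z i)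
            + (∑ k ∈ A, y k) * (∑ i ∈ A, x i * z i)
            + (∑ k ∈ A, z k) * (∑ i ∈ A, x i * y i))
        + 2 * ((m:ℝ)⁻¹ * (m:ℝ)⁻¹) * ((∑ k ∈ A, x k) * (∑ k ∈ A, y k) * (∑ k ∈ A, z k)) := by
    have e1 : ∀ i ∈ A,
        (x i - (m:ℝ)⁻¹ * ∑ k ∈ A, x k) * (y i - (m:ℝ)⁻¹ * ∑ k ∈ A, y k) *
          (z i - (m:ℝ)⁻¹ * ∑ k ∈ A, z k)
        = x i * (y i * z i)
          - (m:ℝ)⁻¹ * ((∑ k ∈ A, x k) * (y i * z i))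
          - (m:ℝ)⁻¹ * ((∑ k ∈ A, y k) * (x i * z i))
          - (m:ℝ)⁻¹ * ((∑ k ∈ A, z k) * (x i * y i))
          + (m:ℝ)⁻¹ * (m:ℝ)⁻¹ * (((∑ k ∈ A, x k) * (∑ k ∈ A, y k)) * z i)
          + (m:ℝ)⁻¹ * (m:ℝ)⁻¹ * (((∑ k ∈ A, x k) * (∑ k ∈ A, z k)) * y i)
          + (m:ℝ)⁻¹ * (m:ℝ)⁻¹ * (((∑ k ∈ A, y k) * (∑ k ∈ A, z k)) * x i)
          - (m:ℝ)⁻¹ * (m:ℝ)⁻¹ * (m:ℝ)⁻¹ *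
              ((∑ k ∈ A, x k) * (∑ k ∈ A, y k) * (∑ k ∈ A, z k)) :=
      fun i _ => by ring
    rw [Finset.sum_congr rfl e1]
    simp only [Finset.sum_add_distrib, Finset.sum_sub_distrib, ← Finset.mul_sum,
      Finset.sum_const, nsmul_eq_mul, hA]
    field_simp
    ring
  rw [step1]
  -- decompositions
  have d1 : (∑ k ∈ A, x k) * (∑ i ∈ A, y i * z i)
      = (∑ i ∈ A, x i * (y i * z i)) + ∑ i ∈ A, ∑ j ∈ A.erase i, x i * (y j * z j) :=
    pair_decomp A x (fun i => y i * z i)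
  have d2 : (∑ k ∈ A, y k) * (∑ i ∈ A, x i * z i)
      = (∑ i ∈ A, x i * (y i * z i)) + ∑ i ∈ A, ∑ j ∈ A.erase i, y i * (x j * z j) := by
    rw [pair_decomp A y (fun i => x i * z i)]
    congr 1
    exact Finset.sum_congr rfl fun i _ => by ring
  have d3 : (∑ k ∈ A, z k) * (∑ i ∈ A, x i * y i)
      = (∑ i ∈ A, x i * (y i * z i)) + ∑ i ∈ A, ∑ j ∈ A.erase i, z i * (x j * y j) := by
    rw [pair_decomp A z (fun i => x i * y i)]
    congr 1
    exact Finset.sum_congr rfl fun i _ => by ring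
  have d4 : (∑ k ∈ A, x k) * (∑ k ∈ A, y k) * (∑ k ∈ A, z k)
      = (∑ i ∈ A, x i * (y i * z i))
        + ((∑ i ∈ A, ∑ j ∈ A.erase i, x i * (y j * z j))
          + (∑ i ∈ A, ∑ j ∈ A.erase i, y i * (x j * z j))
          + (∑ i ∈ A, ∑ j ∈ A.erase i, z i * (x j * y j)))
        + ∑ i ∈ A, ∑ j ∈ A.erase i, ∑ k ∈ (A.erase i).erase j, x k * (y i * z j) := by
    rw [triple_decomp A x y z]
    have cT : ∑ i ∈ A, x i * y i * z i = ∑ i ∈ A, x i * (y i * z i) :=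
      Finset.sum_congr rfl fun i _ => by ring
    have split : ∑ i ∈ A, ∑ j ∈ A.erase i,
          (x i * (y j * z j) + x i * (y i * z j) + x j * (y i * z j))
        = (∑ i ∈ A, ∑ j ∈ A.erase i, x i * (y j * z j))
          + (∑ i ∈ A, ∑ j ∈ A.erase i, x i * (y i * z j))
          + (∑ i ∈ A, ∑ j ∈ A.erase i, x j * (y i * z j)) := by
      simp only [Finset.sum_add_distrib]
    have c1 : ∑ i ∈ A, ∑ j ∈ A.erase i, x i * (y i * z j)
        = ∑ i ∈ A, ∑ j ∈ A.erase i, z i * (x j * y j) := by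
      rw [swap_pair A (fun i j => x i * (y i * z j))]
      exact Finset.sum_congr rfl fun i _ => Finset.sum_congr rfl fun j _ => by ring
    have c2 : ∑ i ∈ A, ∑ j ∈ A.erase i, x j * (y i * z j)
        = ∑ i ∈ A, ∑ j ∈ A.erase i, y i * (x j * z j) :=
      Finset.sum_congr rfl fun i _ => Finset.sum_congr rfl fun j _ => by ring
    rw [cT, split, c1, c2]
    ring
  rw [d1, d2, d3, d4]
  have hE : ∑ i ∈ A, ∑ j ∈ A.erase i,
        (x i * (y j * z j) + y i * (x j * z j) + z i * (x j * y j))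
      = (∑ i ∈ A, ∑ j ∈ A.erase i, x i * (y j * z j))
        + (∑ i ∈ A, ∑ j ∈ A.erase i, y i * (x j * z j))
        + (∑ i ∈ A, ∑ j ∈ A.erase i, z i * (x j * y j)) := by
    simp only [Finset.sum_add_distrib]
  rw [hE]
  field_simp
  ring

lemma choose_id {N k : ℕ} (hk : 1 ≤ k) (hkN : k ≤ N) :
    (k:ℝ) * (N.choose k : ℝ) = (N:ℝ) * ((N-1).choose (k-1) : ℝ) := by
  have h := Nat.add_one_mul_choose_eq (N-1) (k-1)
  rw [Nat.sub_add_cancel (le_trans hk hkN), Nat.sub_add_cancel hk] at h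
  calc (k:ℝ) * (N.choose k : ℝ) = ((N.choose k * k : ℕ) : ℝ) := by push_cast; ring
    _ = ((N * (N-1).choose (k-1) : ℕ) : ℝ) := by rw [← h]
    _ = (N:ℝ) * ((N-1).choose (k-1) : ℝ) := by push_cast; ring

/-- The corrected within-group third moment estimator is unbiased:
`N_Adj,A · E[(1/n_A) ∑_{i∈A} (x_i−x̄_A)(y_i−ȳ_A)(z_i−z̄_A)]
  = (1/n) ∑ (x_i−x̄)(y_i−ȳ)(z_i−z̄)`. -/
theorem stmt11 (n nA : ℕ) (hn : 3 ≤ n) (h1 : 3 ≤ nA) (h2 : nA ≤ n)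
    (x y z : Fin n → ℝ) :
    ((n : ℝ) * ((n : ℝ) - 1) * ((n : ℝ) - 2) /
        (((nA : ℝ) - 1) * ((nA : ℝ) - 2) * (nA : ℝ)) * ((nA : ℝ) ^ 3 / (n : ℝ) ^ 3)) *
      ((∑ A ∈ Finset.powersetCard nA (Finset.univ : Finset (Fin n)),
          (nA : ℝ)⁻¹ * ∑ i ∈ A,
            (x i - (nA : ℝ)⁻¹ * ∑ k ∈ A, x k) *
            (y i - (nA : ℝ)⁻¹ * ∑ k ∈ A, y k) *
            (z i - (nA : ℝ)⁻¹ * ∑ k ∈ A, z k)) /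
        ((Finset.powersetCard nA (Finset.univ : Finset (Fin n))).card : ℝ))
    = (n : ℝ)⁻¹ * ∑ i,
        (x i - (n : ℝ)⁻¹ * ∑ k, x k) * (y i - (n : ℝ)⁻¹ * ∑ k, y k) *
          (z i - (n : ℝ)⁻¹ * ∑ k, z k) := by
  classical
  have hper : ∀ A ∈ Finset.powersetCard nA (Finset.univ : Finset (Fin n)),
      (nA : ℝ)⁻¹ * ∑ i ∈ A,
          (x i - (nA : ℝ)⁻¹ * ∑ k ∈ A, x k) *
          (y i - (nA : ℝ)⁻¹ * ∑ k ∈ A, y k) *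
          (z i - (nA : ℝ)⁻¹ * ∑ k ∈ A, z k)
        = (nA : ℝ)⁻¹ *
            ((1 - 3/(nA:ℝ) + 2/(nA:ℝ)^2) * (∑ i ∈ A, x i * (y i * z i))
              - (1/(nA:ℝ)) * (∑ i ∈ A, ∑ j ∈ A.erase i,
                  (x i * (y j * z j) + y i * (x j * z j) + z i * (x j * y j)))
              + (2/(nA:ℝ)^2) * ((∑ i ∈ A, ∑ j ∈ A.erase i,
                    (x i * (y j * z j) + y i * (x j * z j) + z i * (x j * y j)))
                  + ∑ i ∈ A, ∑ j ∈ A.erase i, ∑ k ∈ (A.erase i).erase j,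
                      x k * (y i * z j))) := by
    intro A hA
    rw [expand x y z A nA (Finset.mem_powersetCard.mp hA).2 h1]
  have pull : ∀ (c1 c2 c3 : ℝ) (F G H : Finset (Fin n) → ℝ),
      ∑ A ∈ Finset.powersetCard nA (Finset.univ : Finset (Fin n)),
          (c1 * F A - c2 * G A + c3 * (G A + H A))
        = c1 * (∑ A ∈ Finset.powersetCard nA (Finset.univ : Finset (Fin n)), F A)
          - c2 * (∑ A ∈ Finset.powersetCard nA (Finset.univ : Finset (Fin n)), G A)
          + c3 * ((∑ A ∈ Finset.powersetCard nA (Finset.univ : Finset (Fin n)), G A)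
            + (∑ A ∈ Finset.powersetCard nA (Finset.univ : Finset (Fin n)), H A)) := by
    intro c1 c2 c3 F G H
    simp only [Finset.sum_add_distrib, Finset.sum_sub_distrib, ← Finset.mul_sum]
  rw [expand x y z (Finset.univ : Finset (Fin n)) n
    (by rw [Finset.card_univ, Fintype.card_fin]) hn]
  rw [Finset.sum_congr rfl hper, ← Finset.mul_sum, pull]
  rw [count1 (show 1 ≤ nA by omega) (fun i => x i * (y i * z i)),
    count2 (show 2 ≤ nA by omega)
      (fun i j => x i * (y j * z j) + y i * (x j * z j) + z i * (x j * y j)),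
    count3 h1 (fun i j k => x k * (y i * z j)),
    Finset.card_powersetCard, Finset.card_univ, Fintype.card_fin]
  -- now a scalar identity
  set S := ∑ i : Fin n, x i * (y i * z i) with hS
  set E := ∑ i : Fin n, ∑ j ∈ (Finset.univ : Finset (Fin n)).erase i,
      (x i * (y j * z j) + y i * (x j * z j) + z i * (x j * y j)) with hE
  set D := ∑ i : Fin n, ∑ j ∈ (Finset.univ : Finset (Fin n)).erase i,
      ∑ k ∈ ((Finset.univ : Finset (Fin n)).erase i).erase j, x k * (y i * z j) with hD
  have ha0 : (nA:ℝ) ≠ 0 := by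
    have : (0:ℝ) < (nA:ℝ) := by exact_mod_cast (by omega : 0 < nA)
    exact this.ne'
  have ha1 : (nA:ℝ) - 1 ≠ 0 := by
    have : (1:ℝ) < (nA:ℝ) := by exact_mod_cast (by omega : 1 < nA)
    intro hc; linarith
  have ha2 : (nA:ℝ) - 2 ≠ 0 := by
    have : (2:ℝ) < (nA:ℝ) := by exact_mod_cast (by omega : 2 < nA)
    intro hc; linarith
  have hb0 : (n:ℝ) ≠ 0 := by
    have : (0:ℝ) < (n:ℝ) := by exact_mod_cast (by omega : 0 < n)
    exact this.ne'
  have hb1 : (n:ℝ) - 1 ≠ 0 := by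
    have : (1:ℝ) < (n:ℝ) := by exact_mod_cast (by omega : 1 < n)
    intro hc; linarith
  have hb2 : (n:ℝ) - 2 ≠ 0 := by
    have : (2:ℝ) < (n:ℝ) := by exact_mod_cast (by omega : 2 < n)
    intro hc; linarith
  have hN0 : ((n.choose nA : ℕ):ℝ) ≠ 0 := by
    have : 0 < n.choose nA := Nat.choose_pos h2
    exact_mod_cast this.ne'
  have r1 : (nA:ℝ) * ((n.choose nA : ℕ):ℝ) = (n:ℝ) * (((n-1).choose (nA-1) : ℕ):ℝ) :=
    choose_id (by omega) h2
  have e1a : ((nA-1 : ℕ):ℝ) = (nA:ℝ) - 1 := by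
    rw [Nat.cast_sub (by omega : 1 ≤ nA)]; norm_num
  have e1b : ((n-1 : ℕ):ℝ) = (n:ℝ) - 1 := by
    rw [Nat.cast_sub (by omega : 1 ≤ n)]; norm_num
  have e2a : ((nA-2 : ℕ):ℝ) = (nA:ℝ) - 2 := by
    rw [Nat.cast_sub (by omega : 2 ≤ nA)]; norm_num
  have e2b : ((n-2 : ℕ):ℝ) = (n:ℝ) - 2 := by
    rw [Nat.cast_sub (by omega : 2 ≤ n)]; norm_num
  have r2 : ((nA:ℝ) - 1) * (((n-1).choose (nA-1) : ℕ):ℝ)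
      = ((n:ℝ) - 1) * (((n-2).choose (nA-2) : ℕ):ℝ) := by
    have h := choose_id (N := n-1) (k := nA-1) (by omega) (by omega)
    rw [show n-1-1 = n-2 by omega, show nA-1-1 = nA-2 by omega, e1a, e1b] at h
    exact h
  have r3 : ((nA:ℝ) - 2) * (((n-2).choose (nA-2) : ℕ):ℝ)
      = ((n:ℝ) - 2) * (((n-3).choose (nA-3) : ℕ):ℝ) := by
    have h := choose_id (N := n-2) (k := nA-2) (by omega) (by omega)
    rw [show n-2-1 = n-3 by omega, show nA-2-1 = nA-3 by omega, e2a, e2b] at h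
    exact h
  have hC1 : (((n-1).choose (nA-1) : ℕ):ℝ) = (nA:ℝ) * ((n.choose nA : ℕ):ℝ) / (n:ℝ) := by
    field_simp
    linarith [r1]
  have hC2 : (((n-2).choose (nA-2) : ℕ):ℝ)
      = ((nA:ℝ) - 1) * (((n-1).choose (nA-1) : ℕ):ℝ) / ((n:ℝ) - 1) := by
    field_simp
    linarith [r2]
  have hC3 : (((n-3).choose (nA-3) : ℕ):ℝ)
      = ((nA:ℝ) - 2) * (((n-2).choose (nA-2) : ℕ):ℝ) / ((n:ℝ) - 2) := by
    field_simp
    linarith [r3]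
  rw [hC3, hC2, hC1]
  field_simp
  ring
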